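/- Let $g\in\mathbb{R}[x]$ be a nonzero univariate polynomial with complex roots $\alpha_1,\dots,\alpha_d$ (with multiplicity), let $x\in\mathbb{R}$ with $g(x)\neq 0$, and let $n\geq 0$. Then $\left|\frac{g^{(n)}(x)}{g(x)}\right|\leq\left(\sum_{i=1}^d\frac{1}{|x-\alpha_i|}\right)^n$. -/

import Mathlib

open Polynomial

private lemma aux_pow (s t : ℝ) (hs : 0 ≤ s) (ht : 0 ≤ t) :
    ∀ n : ℕ, s ^ (n + 1) + (n + 1) * t * s ^ n ≤ (t + s) ^ (n + 1) := by
  intro n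
  induction n with
  | zero => simpa using by nlinarith
  | succ n ih =>
    have h0 : (0:ℝ) ≤ s ^ n := pow_nonneg hs n
    have hts : (0:ℝ) ≤ t + s := by linarith
    have hn : (0:ℝ) ≤ (n:ℝ) := Nat.cast_nonneg n
    push_cast
    have h1 : s ^ (n + 1 + 1) + ((n:ℝ) + 1 + 1) * t * s ^ (n + 1)
        ≤ (t + s) * (s ^ (n + 1) + ((n:ℝ) + 1) * t * s ^ n) := by
      have e1 : s ^ (n + 1) = s ^ n * s := pow_succ s n
      have e2 : s ^ (n + 1 + 1) = s ^ n * s * s := by rw [pow_succ, e1]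
      rw [e1, e2]
      nlinarith [mul_nonneg hn (mul_nonneg (mul_nonneg ht ht) h0),
        mul_nonneg (mul_nonneg ht ht) h0]
    refine h1.trans ?_
    calc (t + s) * (s ^ (n + 1) + ((n:ℝ) + 1) * t * s ^ n)
        ≤ (t + s) * (t + s) ^ (n + 1) := mul_le_mul_of_nonneg_left ih hts
      _ = (t + s) ^ (n + 1 + 1) := (pow_succ' _ _).symm

private lemma iter_deriv_X_sub_C_mul (α : ℂ) (q : ℂ[X]) (n : ℕ) :
    derivative^[n + 1] ((X - C α) * q) =
      (X - C α) * derivative^[n + 1] q + (n + 1) • derivative^[n] q := by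
  induction n with
  | zero => simp [derivative_mul]; ring
  | succ n ih =>
    rw [Function.iterate_succ_apply', ih]
    rw [derivative_add, derivative_mul, derivative_smul,
      ← Function.iterate_succ_apply' derivative (n+1),
      ← Function.iterate_succ_apply' derivative n]
    simp only [derivative_sub, derivative_X, derivative_C, sub_zero, one_mul, succ_nsmul]
    ring

private lemma key (M : Multiset ℂ) : ∀ (c : ℂ) (x : ℂ) (n : ℕ),
    eval x (C c * (M.map fun α => X - C α).prod) ≠ 0 →
      ‖eval x (derivative^[n] (C c * (M.map fun α => X - C α).prod))‖ ≤
        ‖eval x (C c * (M.map fun α => X - C α).prod)‖ *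
          ((M.map fun α => 1 / ‖x - α‖).sum) ^ n := by
  induction M using Multiset.induction_on with
  | empty =>
    intro c x n hx
    cases n with
    | zero => simp
    | succ n =>
      simp only [Multiset.map_zero, Multiset.prod_zero, mul_one] at hx ⊢
      rw [iterate_derivative_C (Nat.succ_pos n)]
      simp
  | cons α M ih =>
    intro c x n hx
    have hfact : C c * ((α ::ₘ M).map fun β => X - C β).prod
        = (X - C α) * (C c * (M.map fun β => X - C β).prod) := by
      rw [Multiset.map_cons, Multiset.prod_cons]; ring
    set q : ℂ[X] := C c * (M.map fun β => X - C β).prod with hq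
    rw [hfact] at hx ⊢
    have hxe : eval x ((X - C α) * q) = (x - α) * eval x q := by simp
    rw [hxe] at hx
    have hxa : x - α ≠ 0 := fun h => hx (by rw [h, zero_mul])
    have hqx : eval x q ≠ 0 := fun h => hx (by rw [h, mul_zero])
    have hr : (0:ℝ) < ‖x - α‖ := by
      simpa using (norm_pos_iff.mpr hxa)
    set r : ℝ := ‖x - α‖ with hrdef
    set A : ℝ := ‖eval x q‖ with hA
    set S : ℝ := (M.map fun β => 1 / ‖x - β‖).sum with hS
    have hSnn : 0 ≤ S := by
      rw [hS]
      apply Multiset.sum_nonneg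
      intro a ha
      rw [Multiset.mem_map] at ha
      obtain ⟨b, _, rfl⟩ := ha
      positivity
    have hsum : ((α ::ₘ M).map fun β => 1 / ‖x - β‖).sum = 1 / r + S := by
      rw [Multiset.map_cons, Multiset.sum_cons]
    rw [hsum, hxe, norm_mul]
    cases n with
    | zero => simp
    | succ n =>
      rw [iter_deriv_X_sub_C_mul]
      have h1 := ih c x (n + 1) hqx
      have h2 := ih c x n hqx
      rw [← hq, ← hS] at h1 h2
      have step : ‖eval x ((X - C α) * derivative^[n+1] q + (n+1) • derivative^[n] q)‖
          ≤ r * (A * S ^ (n+1)) + ((n:ℝ)+1) * (A * S ^ n) := by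
        rw [eval_add]
        refine le_trans (norm_add_le _ _) ?_
        gcongr
        · rw [eval_mul, norm_mul]
          simp only [eval_sub, eval_X, eval_C, ← hrdef]
          exact mul_le_mul_of_nonneg_left h1 hr.le
        · rw [eval_smul, nsmul_eq_mul, norm_mul, Complex.norm_natCast]
          push_cast
          exact mul_le_mul_of_nonneg_left h2 (by positivity)
      refine step.trans ?_
      have hAnn : 0 ≤ A := norm_nonneg _
      have hb : S ^ (n+1) + ((n:ℝ)+1) * (1/r) * S ^ n ≤ (1/r + S) ^ (n+1) := by
        have := aux_pow S (1 / r) hSnn (by positivity) n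
        push_cast at this
        exact this
      calc r * (A * S ^ (n+1)) + ((n:ℝ)+1) * (A * S ^ n)
          = (r * A) * (S ^ (n+1) + ((n:ℝ)+1) * (1/r) * S ^ n) := by
            field_simp
        _ ≤ (r * A) * (1/r + S) ^ (n+1) :=
            mul_le_mul_of_nonneg_left hb (by positivity)

theorem stmt_5 (g : Polynomial ℝ) (hg : g ≠ 0) (x : ℝ) (hx : g.eval x ≠ 0) (n : ℕ) :
    |(Polynomial.derivative^[n] g).eval x / g.eval x| ≤
      (((g.map (algebraMap ℝ ℂ)).roots.map
        (fun α => 1 / ‖(x : ℂ) - α‖)).sum) ^ n := by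
  set p : ℂ[X] := g.map (algebraMap ℝ ℂ) with hp
  have hsplit : p = C p.leadingCoeff * (p.roots.map fun a => X - C a).prod :=
    (IsAlgClosed.splits _).eq_prod_roots
  have heval : ∀ h : ℝ[X], eval (x:ℂ) (h.map (algebraMap ℝ ℂ)) = ((eval x h : ℝ) : ℂ) := by
    intro h
    rw [eval_map]
    exact eval₂_at_apply (algebraMap ℝ ℂ) x
  have hpx : eval (x:ℂ) p ≠ 0 := by
    rw [hp, heval]
    exact_mod_cast Complex.ofReal_ne_zero.mpr hx
  have hkey := key p.roots p.leadingCoeff (x:ℂ) n (by rw [← hsplit]; exact hpx)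
  rw [← hsplit] at hkey
  rw [hp, iterate_derivative_map, heval, heval] at hkey
  rw [Complex.norm_real, Complex.norm_real, Real.norm_eq_abs, Real.norm_eq_abs] at hkey
  rw [abs_div]
  rw [div_le_iff₀ (abs_pos.mpr hx)]
  rw [mul_comm]
  exact hkey
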